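/- Let Γ be a finitely generated group whose abelianization Γ/[Γ,Γ] is finite. Let X be a compact subset of [0,1] with 0 ∈ X such that 0 is an accumulation point of X. Suppose that for each γ ∈ Γ we are given real numbers a_γ > 0, b_γ > 0 and a function φ_γ : ℝ → ℝ such that: φ_γ(0) = 0; φ_γ restricted to [0, a_γ) is a bijection onto [0, b_γ); and φ_γ is continuously differentiable on [0, a_γ) with everywhere strictly positive derivative there. Assume further that for all γ₁, γ₂ ∈ Γ there exists c > 0 such that for every x ∈ [0, c] ∩ X one has x < a_{γ₂}, φ_{γ₂}(x) < a_{γ₁}, and φ_{γ₁γ₂}(x) = φ_{γ₁}(φ_{γ₂}(x)). Then for every γ ∈ Γ the right derivative of φ_γ at 0 equals 1. -/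

import Mathlib

open Set Filter Topology

/-- Under the hypotheses of the generalized Thurston stability lemma
(`Γ` finitely generated with finite abelianization, `X ⊆ [0,1]` compact with `0 ∈ X`
an accumulation point, `φ γ : ℝ → ℝ` fixing `0`, bijective from `[0, a γ)` onto
`[0, b γ)`, continuously differentiable there with strictly positive derivative,
and `φ (γ₁γ₂)` agreeing with `φ γ₁ ∘ φ γ₂` on `[0,c] ∩ X` for some `c > 0`),
the right derivative of each `φ γ` at `0`, i.e. the limit of
`(φ γ x − φ γ 0)/x` as `x → 0⁺`, equals `1`. -/
theorem stmt4 (Γ : Type*) [Group Γ] [Group.FG Γ]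
    (hab : Finite (Abelianization Γ))
    (X : Set ℝ) (hXcompact : IsCompact X) (hXsub : X ⊆ Icc 0 1)
    (h0X : (0 : ℝ) ∈ X) (h0acc : (0 : ℝ) ∈ closure (X \ {0}))
    (a b : Γ → ℝ) (ha : ∀ γ, 0 < a γ) (hb : ∀ γ, 0 < b γ)
    (φ : Γ → ℝ → ℝ) (φ' : Γ → ℝ → ℝ)
    (hφ0 : ∀ γ, φ γ 0 = 0)
    (hbij : ∀ γ, BijOn (φ γ) (Ico 0 (a γ)) (Ico 0 (b γ)))
    (hderiv : ∀ γ, ∀ x ∈ Ico 0 (a γ),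
      HasDerivWithinAt (φ γ) (φ' γ x) (Ico 0 (a γ)) x)
    (hderivcont : ∀ γ, ContinuousOn (φ' γ) (Ico 0 (a γ)))
    (hderivpos : ∀ γ, ∀ x ∈ Ico 0 (a γ), 0 < φ' γ x)
    (hcomp : ∀ γ₁ γ₂ : Γ, ∃ c > 0, ∀ x ∈ Icc 0 c ∩ X,
      x < a γ₂ ∧ φ γ₂ x < a γ₁ ∧ φ (γ₁ * γ₂) x = φ γ₁ (φ γ₂ x)) :
    ∀ γ : Γ, Tendsto (fun x : ℝ => (φ γ x - φ γ 0) / x) (nhdsWithin 0 (Ioi 0))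
      (nhds 1) := by
  have hzero : ∀ γ, (0 : ℝ) ∈ Ico 0 (a γ) := fun γ => ⟨le_refl 0, ha γ⟩
  have hDpos : ∀ γ, 0 < φ' γ 0 := fun γ => hderivpos γ 0 (hzero γ)
  -- key multiplicativity of the derivative at 0
  have key : ∀ γ₁ γ₂ : Γ, φ' (γ₁ * γ₂) 0 = φ' γ₁ 0 * φ' γ₂ 0 := by
    intro γ₁ γ₂
    obtain ⟨c, hc, hC⟩ := hcomp γ₁ γ₂
    set c' : ℝ := min c (a (γ₁ * γ₂) / 2) with hc'def
    have hc'pos : 0 < c' := lt_min hc (by linarith [ha (γ₁ * γ₂)])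
    set S : Set ℝ := Icc 0 c' ∩ X with hSdef
    have hSsub : ∀ x ∈ S, x ∈ Icc 0 c ∩ X := by
      rintro x ⟨⟨hx0, hxc⟩, hxX⟩
      exact ⟨⟨hx0, hxc.trans (min_le_left _ _)⟩, hxX⟩
    have h0S : (0 : ℝ) ∈ S := ⟨⟨le_refl 0, hc'pos.le⟩, h0X⟩
    -- the filter 𝓝[S \ {0}] 0 is nontrivial
    have hicc : Icc (0:ℝ) c' ∈ 𝓝[X \ {0}] 0 := by
      rw [mem_nhdsWithin]
      refine ⟨Iio c', isOpen_Iio, hc'pos, ?_⟩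
      rintro x ⟨hx1, hx2, _⟩
      exact ⟨(hXsub hx2).1, le_of_lt hx1⟩
    have hSdiff : S \ {0} = Icc 0 c' ∩ (X \ {0}) := by
      ext x
      simp only [hSdef, mem_diff, mem_inter_iff, mem_singleton_iff]
      tauto
    have hne : (𝓝[S \ {0}] (0:ℝ)).NeBot := by
      rw [hSdiff, nhdsWithin_inter_of_mem hicc]
      exact mem_closure_iff_nhdsWithin_neBot.mp h0acc
    -- derivative of φ (γ₁ γ₂) within S
    have hd1 : HasDerivWithinAt (φ (γ₁ * γ₂)) (φ' (γ₁ * γ₂) 0) S 0 := by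
      refine (hderiv _ 0 (hzero _)).mono ?_
      rintro x ⟨⟨hx0, hxc⟩, _⟩
      refine ⟨hx0, lt_of_le_of_lt (hxc.trans (min_le_right _ _)) ?_⟩
      linarith [ha (γ₁ * γ₂)]
    -- derivative of the composition within S
    have hd2a : HasDerivWithinAt (φ γ₂) (φ' γ₂ 0) S 0 := by
      refine (hderiv _ 0 (hzero _)).mono ?_
      rintro x hx
      exact ⟨hx.1.1, (hC x (hSsub x hx)).1⟩
    have hd2b : HasDerivWithinAt (φ γ₁) (φ' γ₁ 0) (Ico 0 (a γ₁)) (φ γ₂ 0) := by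
      rw [hφ0 γ₂]; exact hderiv _ 0 (hzero _)
    have hmaps : MapsTo (φ γ₂) S (Ico 0 (a γ₁)) := by
      intro x hx
      have hx2 : x ∈ Ico 0 (a γ₂) := ⟨hx.1.1, (hC x (hSsub x hx)).1⟩
      exact ⟨((hbij γ₂).mapsTo hx2).1, (hC x (hSsub x hx)).2.1⟩
    have hd2 : HasDerivWithinAt (φ γ₁ ∘ φ γ₂) (φ' γ₁ 0 * φ' γ₂ 0) S 0 :=
      HasDerivWithinAt.comp 0 hd2b hd2a hmaps
    -- the two functions agree on S, so derivatives coincide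
    have hd1' : HasDerivWithinAt (φ γ₁ ∘ φ γ₂) (φ' (γ₁ * γ₂) 0) S 0 := by
      refine hd1.congr (fun y hy => ?_) ?_
      · exact ((hC y (hSsub y hy)).2.2).symm
      · exact ((hC 0 (hSsub 0 h0S)).2.2).symm
    rw [hasDerivWithinAt_iff_tendsto_slope] at hd1' hd2
    exact tendsto_nhds_unique hd1' hd2
  -- D 1 = 1
  have hone1 : φ' (1 : Γ) 0 = 1 := by
    have h := key 1 1
    rw [one_mul] at h
    have := hDpos 1
    nlinarith
  -- D g⁻¹ * D g = 1
  have hinv : ∀ g : Γ, φ' g⁻¹ 0 * φ' g 0 = 1 := by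
    intro g
    have h := key g⁻¹ g
    rw [inv_mul_cancel, hone1] at h
    linarith
  -- D is trivial on the commutator subgroup
  have hcommtriv : ∀ g ∈ commutator Γ, φ' g 0 = 1 := by
    intro g hg
    rw [commutator_eq_closure] at hg
    induction hg using Subgroup.closure_induction with
    | mem x hx =>
      obtain ⟨g₁, g₂, rfl⟩ := hx
      have e1 := key g₁ (g₂ * (g₁⁻¹ * g₂⁻¹))
      have e2 := key g₂ (g₁⁻¹ * g₂⁻¹)
      have e3 := key g₁⁻¹ g₂⁻¹
      have h1 := hinv g₁
      have h2 := hinv g₂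
      open scoped commutatorElement in
      have hcj : ⁅g₁, g₂⁆ = g₁ * (g₂ * (g₁⁻¹ * g₂⁻¹)) := by group
      rw [hcj, e1, e2, e3]
      nlinarith [hDpos g₁, hDpos g₂, hDpos g₁⁻¹, hDpos g₂⁻¹]
    | one => exact hone1
    | mul x y hx hy ihx ihy => rw [key x y, ihx, ihy, one_mul]
    | inv x hx ihx =>
      have := hinv x
      rw [ihx, mul_one] at this
      exact this
  -- every element has a power in the commutator subgroup
  have hone : ∀ γ : Γ, φ' γ 0 = 1 := by
    intro γ
    have hfin : Finite (Γ ⧸ commutator Γ) := hab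
    have hfo := isOfFinOrder_of_finite (QuotientGroup.mk' (commutator Γ) γ)
    obtain ⟨n, hn, hxn⟩ := isOfFinOrder_iff_pow_eq_one.mp hfo
    have hmem : γ ^ n ∈ commutator Γ := by
      rw [← QuotientGroup.ker_mk' (commutator Γ)]
      rw [MonoidHom.mem_ker, map_pow]
      exact hxn
    have hpow : ∀ m : ℕ, φ' (γ ^ m) 0 = (φ' γ 0) ^ m := by
      intro m
      induction m with
      | zero => simpa using hone1
      | succ k ih => rw [pow_succ, pow_succ, key, ih]
    have hDn : (φ' γ 0) ^ n = 1 := by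
      rw [← hpow n]; exact hcommtriv _ hmem
    have hpos := hDpos γ
    rcases lt_trichotomy (φ' γ 0) 1 with h | h | h
    · have : (φ' γ 0) ^ n < 1 ^ n := pow_lt_pow_left₀ h hpos.le hn.ne'
      rw [one_pow, hDn] at this; exact absurd this (lt_irrefl 1)
    · exact h
    · have : (1:ℝ) ^ n < (φ' γ 0) ^ n := pow_lt_pow_left₀ h zero_le_one hn.ne'
      rw [one_pow, hDn] at this; exact absurd this (lt_irrefl 1)
  -- conclude
  intro γ
  have h := hderiv γ 0 (hzero γ)
  rw [hasDerivWithinAt_iff_tendsto_slope] at h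
  rw [Ico_diff_left, nhdsWithin_Ioo_eq_nhdsGT (ha γ)] at h
  have heq : (fun x : ℝ => (φ γ x - φ γ 0) / x) = slope (φ γ) 0 := by
    funext x
    rw [slope_def_field, sub_zero]
  rw [heq, ← hone γ]
  exact h
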